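/- In the episode model, if the collection of indicator variables {B(σ,i) : σ ∈ Σ, 1 ≤ i ≤ n(σ)} contains at least two variables, then this collection is negative cylinder dependent (NCD). -/

import Mathlib

open MeasureTheory ProbabilityTheory

/-- A family of Bernoulli ({0,1}-valued) random variables is *negative cylinder
dependent* (NCD) if for every finite subset `S` of indices,
`P(∩_{i∈S} {Z_i = 1}) ≤ Π_{i∈S} P(Z_i = 1)` and
`P(∩_{i∈S} {Z_i = 0}) ≤ Π_{i∈S} P(Z_i = 0)`. -/
def NCD {Ω ι : Type*} [MeasurableSpace Ω] (μ : Measure Ω) (Z : ι → Ω → ℝ) : Prop :=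
  ∀ S : Finset ι,
    μ (⋂ i ∈ S, {ω | Z i ω = 1}) ≤ ∏ i ∈ S, μ {ω | Z i ω = 1} ∧
    μ (⋂ i ∈ S, {ω | Z i ω = 0}) ≤ ∏ i ∈ S, μ {ω | Z i ω = 0}

/-- Episode model: `B(σ,t)` is the indicator of the event that episode `t`
(one on which `σ` is in play) results in outcome `σ`. -/
noncomputable def Bvar {Ω Sig : Type*} {Tn : ℕ} (O : Fin Tn → Ω → Option Sig)
    (σ : Sig) (t : Fin Tn) (ω : Ω) : ℝ :=
  @ite _ (O t ω = some σ) (Classical.dec _) 1 0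

/-- Weierstrass product inequality: `1 - ∑ f ≤ ∏ (1 - f)` for `f` in `[0,1]`. -/
lemma weierstrass_prod {ι : Type*} (s : Finset ι) (f : ι → ℝ)
    (h0 : ∀ i ∈ s, 0 ≤ f i) (h1 : ∀ i ∈ s, f i ≤ 1) :
    1 - ∑ i ∈ s, f i ≤ ∏ i ∈ s, (1 - f i) := by
  classical
  revert h0 h1
  induction s using Finset.induction_on with
  | empty => intro _ _; simp
  | @insert a s ha ih =>
    intro h0 h1
    rw [Finset.sum_insert ha, Finset.prod_insert ha]
    have h0a := h0 a (Finset.mem_insert_self a s)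
    have h1a := h1 a (Finset.mem_insert_self a s)
    have ih' := ih (fun i hi => h0 i (Finset.mem_insert_of_mem hi))
      (fun i hi => h1 i (Finset.mem_insert_of_mem hi))
    have hsum : 0 ≤ ∑ i ∈ s, f i :=
      Finset.sum_nonneg fun i hi => h0 i (Finset.mem_insert_of_mem hi)
    nlinarith [mul_le_mul_of_nonneg_left ih' (sub_nonneg.2 h1a),
      mul_nonneg h0a hsum]

/-- Grouping the intersection/product by episode and using independence. -/
lemma grouped_bound {Ω Sig : Type*} [MeasurableSpace Ω] (μ : Measure Ω)
    {Tn : ℕ} (O : Fin Tn → Ω → Option Sig)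
    (hOindep : iIndepFun (m := fun _ : Fin Tn => (⊤ : MeasurableSpace (Option Sig))) O μ)
    {ι : Type*} [DecidableEq ι] (π : ι → Fin Tn) (c : ι → Set (Option Sig))
    (S : Finset ι)
    (hbound : ∀ t ∈ S.image π,
      μ (O t ⁻¹' ⋂ i ∈ S.filter (fun i => π i = t), c i)
        ≤ ∏ i ∈ S.filter (fun i => π i = t), μ (O (π i) ⁻¹' c i)) :
    μ (⋂ i ∈ S, O (π i) ⁻¹' c i) ≤ ∏ i ∈ S, μ (O (π i) ⁻¹' c i) := by
  classical
  have hgroup : (⋂ i ∈ S, O (π i) ⁻¹' c i)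
      = ⋂ t ∈ S.image π, O t ⁻¹' ⋂ i ∈ S.filter (fun i => π i = t), c i := by
    ext ω
    constructor
    · intro hω
      refine Set.mem_iInter₂.mpr fun t ht => ?_
      refine Set.mem_iInter₂.mpr fun i hi => ?_
      have hit := (Finset.mem_filter.mp hi).2
      have := Set.mem_iInter₂.mp hω i (Finset.mem_filter.mp hi).1
      rwa [hit] at this
    · intro hω
      refine Set.mem_iInter₂.mpr fun i hi => ?_
      exact Set.mem_iInter₂.mp
        (Set.mem_iInter₂.mp hω (π i) (Finset.mem_image_of_mem π hi)) i
        (Finset.mem_filter.mpr ⟨hi, rfl⟩)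
  have hmeas : ∀ t ∈ S.image π,
      MeasurableSet[(⊤ : MeasurableSpace (Option Sig)).comap (O t)]
        (O t ⁻¹' ⋂ i ∈ S.filter (fun i => π i = t), c i) :=
    fun t _ => ⟨_, trivial, rfl⟩
  rw [hgroup, hOindep.meas_biInter hmeas]
  calc ∏ t ∈ S.image π, μ (O t ⁻¹' ⋂ i ∈ S.filter (fun i => π i = t), c i)
      ≤ ∏ t ∈ S.image π, ∏ i ∈ S.filter (fun i => π i = t), μ (O (π i) ⁻¹' c i) :=
        Finset.prod_le_prod' hbound
    _ = ∏ i ∈ S, μ (O (π i) ⁻¹' c i) :=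
        Finset.prod_fiberwise_of_maps_to (fun i hi => Finset.mem_image_of_mem π hi) _

/-- In the episode model, if the collection of indicator variables
`{B(σ,i) : σ ∈ Σ, 1 ≤ i ≤ n(σ)}` (indexed equivalently by the pairs `(σ,t)` with
`σ ∈ A_t`) contains at least two variables, then this collection is negative cylinder
dependent (NCD). -/
theorem episode_Bvars_NCD
    {Ω : Type*} [MeasurableSpace Ω] (μ : Measure Ω) [IsProbabilityMeasure μ]
    {Sig : Type*} [Fintype Sig] [DecidableEq Sig]
    (q : Sig → ℝ) (hq : ∀ σ, 0 ≤ q σ ∧ q σ ≤ 1)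
    (Tn : ℕ) (hT : 1 ≤ Tn)
    (A : Fin Tn → Finset Sig)
    (hA : ∀ t, ∑ σ ∈ A t, q σ ≤ 1)
    (O : Fin Tn → Ω → Option Sig)
    (hOmeas : ∀ t, @Measurable Ω (Option Sig) _ ⊤ (O t))
    (hOindep : iIndepFun (m := fun _ : Fin Tn => (⊤ : MeasurableSpace (Option Sig))) O μ)
    (hsupp : ∀ (t : Fin Tn) (σ : Sig), σ ∉ A t → μ {ω | O t ω = some σ} = 0)
    (hdist : ∀ (t : Fin Tn), ∀ σ ∈ A t,
      μ {ω | O t ω = some σ} = ENNReal.ofReal (q σ))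
    (hnone : ∀ t : Fin Tn,
      μ {ω | O t ω = none} = ENNReal.ofReal (1 - ∑ σ ∈ A t, q σ))
    (hcard : 2 ≤ Fintype.card {pr : Sig × Fin Tn // pr.1 ∈ A pr.2}) :
    NCD μ (fun pr : {pr : Sig × Fin Tn // pr.1 ∈ A pr.2} =>
      Bvar O pr.1.1 pr.1.2) := by
  classical
  have hq' := hq
  set ι := {pr : Sig × Fin Tn // pr.1 ∈ A pr.2} with hι
  intro S
  have hmeas1 : ∀ (t : Fin Tn) (s : Set (Option Sig)), MeasurableSet (O t ⁻¹' s) :=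
    fun t s => hOmeas t trivial
  have hFt : ∀ (t : Fin Tn), ∀ i ∈ S.filter (fun i : ι => i.1.2 = t), i.1.2 = t :=
    fun t i hi => (Finset.mem_filter.mp hi).2
  have hinj : ∀ (t : Fin Tn), ∀ a ∈ S.filter (fun i : ι => i.1.2 = t),
      ∀ b ∈ S.filter (fun i : ι => i.1.2 = t), a.1.1 = b.1.1 → a = b := by
    intro t a ha b hb h
    exact Subtype.ext (Prod.ext h ((hFt t a ha).trans (hFt t b hb).symm))
  constructor
  · -- ones
    have hone : ∀ i : ι,
        {ω | Bvar O i.1.1 i.1.2 ω = 1} = O i.1.2 ⁻¹' {some i.1.1} := by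
      intro i; ext ω
      simp only [Set.mem_setOf_eq, Set.mem_preimage, Set.mem_singleton_iff, Bvar]
      split <;> simp_all
    simp only [hone]
    refine grouped_bound μ O hOindep (fun i : ι => i.1.2) (fun i => {some i.1.1}) S ?_
    intro t ht
    set F := S.filter (fun i : ι => i.1.2 = t) with hFdef
    by_cases hc1 : F.card ≤ 1
    · obtain ⟨j, hjS, hjt⟩ := Finset.mem_image.mp ht
      have hjF : j ∈ F := Finset.mem_filter.mpr ⟨hjS, hjt⟩
      have hcard1 : F.card = 1 :=
        le_antisymm hc1 (Finset.card_pos.mpr ⟨j, hjF⟩)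
      obtain ⟨i, hi⟩ := Finset.card_eq_one.mp hcard1
      have hiF : i ∈ F := hi ▸ Finset.mem_singleton_self i
      have hit : i.1.2 = t := hFt t i hiF
      rw [hi]
      simp [hit]
    · push_neg at hc1
      obtain ⟨a, ha, b, hb, hab⟩ := Finset.one_lt_card.mp hc1
      have hne : a.1.1 ≠ b.1.1 := fun h => hab (hinj t a ha b hb h)
      have hempty : (⋂ i ∈ F, ({some i.1.1} : Set (Option Sig))) = ∅ := by
        ext x
        simp only [Set.mem_iInter, Set.mem_singleton_iff, Set.mem_empty_iff_false,
          iff_false, not_forall]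
        by_cases hxa : x = some a.1.1
        · exact ⟨b, hb, fun h => hne (by rw [hxa] at h; exact Option.some.inj h)⟩
        · exact ⟨a, ha, hxa⟩
      rw [hempty]
      simp
  · -- zeros
    have hzero : ∀ i : ι,
        {ω | Bvar O i.1.1 i.1.2 ω = 0} = O i.1.2 ⁻¹' ({some i.1.1}ᶜ) := by
      intro i; ext ω
      simp only [Set.mem_setOf_eq, Set.mem_preimage, Set.mem_compl_iff,
        Set.mem_singleton_iff, Bvar]
      split <;> simp_all
    simp only [hzero]
    refine grouped_bound μ O hOindep (fun i : ι => i.1.2) (fun i => {some i.1.1}ᶜ) S ?_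
    intro t ht
    set F := S.filter (fun i : ι => i.1.2 = t) with hFdef
    have hmemA : ∀ i ∈ F, i.1.1 ∈ A t := fun i hi => (hFt t i hi) ▸ i.2
    have hmu_single : ∀ i ∈ F, μ (O t ⁻¹' {some i.1.1}) = ENNReal.ofReal (q i.1.1) :=
      fun i hi => hdist t i.1.1 (hmemA i hi)
    have hUnion : μ (⋃ i ∈ F, O t ⁻¹' ({some i.1.1} : Set (Option Sig)))
        = ENNReal.ofReal (∑ i ∈ F, q i.1.1) := by
      rw [measure_biUnion_finset ?disj (fun i _ => hmeas1 t _),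
        ENNReal.ofReal_sum_of_nonneg (fun i _ => (hq i.1.1).1)]
      · exact Finset.sum_congr rfl hmu_single
      case disj =>
        intro a ha b hb hab
        have hne : a.1.1 ≠ b.1.1 := fun h => hab (hinj t a ha b hb h)
        refine Set.disjoint_left.mpr fun ω hωa hωb => ?_
        simp only [Set.mem_preimage, Set.mem_singleton_iff] at hωa hωb
        exact hne (Option.some.inj (hωa ▸ hωb))
    have hsum_nonneg : (0:ℝ) ≤ ∑ i ∈ F, q i.1.1 :=
      Finset.sum_nonneg fun i _ => (hq i.1.1).1
    have hsumle : ∑ i ∈ F, q i.1.1 ≤ 1 := by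
      have h1 : ∑ i ∈ F, q i.1.1 = ∑ σ ∈ F.image (fun i : ι => i.1.1), q σ :=
        (Finset.sum_image (fun a ha b hb h => hinj t a ha b hb h)).symm
      have h2 : F.image (fun i : ι => i.1.1) ⊆ A t := by
        intro σ hσ
        obtain ⟨i, hi, rfl⟩ := Finset.mem_image.mp hσ
        exact hmemA i hi
      calc ∑ i ∈ F, q i.1.1 = ∑ σ ∈ F.image (fun i : ι => i.1.1), q σ := h1
        _ ≤ ∑ σ ∈ A t, q σ :=
          Finset.sum_le_sum_of_subset_of_nonneg h2 (fun σ _ _ => (hq σ).1)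
        _ ≤ 1 := hA t
    have hInter : (O t ⁻¹' ⋂ i ∈ F, ({some i.1.1}ᶜ : Set (Option Sig)))
        = (⋃ i ∈ F, O t ⁻¹' ({some i.1.1} : Set (Option Sig)))ᶜ := by
      rw [← Set.compl_iUnion₂, Set.preimage_compl, Set.preimage_iUnion₂]
    have hL : μ (O t ⁻¹' ⋂ i ∈ F, ({some i.1.1}ᶜ : Set (Option Sig)))
        = ENNReal.ofReal (1 - ∑ i ∈ F, q i.1.1) := by
      rw [hInter, prob_compl_eq_one_sub
        (Finset.measurableSet_biUnion F (fun i _ => hmeas1 t _)), hUnion,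
        ← ENNReal.ofReal_one, ← ENNReal.ofReal_sub _ hsum_nonneg]
    have hR : ∀ i ∈ F, μ (O i.1.2 ⁻¹' ({some i.1.1}ᶜ : Set (Option Sig)))
        = ENNReal.ofReal (1 - q i.1.1) := by
      intro i hi
      rw [Set.preimage_compl, prob_compl_eq_one_sub (hmeas1 _ _), hFt t i hi,
        hmu_single i hi, ← ENNReal.ofReal_one, ← ENNReal.ofReal_sub _ (hq i.1.1).1]
    calc μ (O t ⁻¹' ⋂ i ∈ F, ({some i.1.1}ᶜ : Set (Option Sig)))
        = ENNReal.ofReal (1 - ∑ i ∈ F, q i.1.1) := hL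
      _ ≤ ENNReal.ofReal (∏ i ∈ F, (1 - q i.1.1)) :=
          ENNReal.ofReal_le_ofReal
            (weierstrass_prod F _ (fun i _ => (hq i.1.1).1) (fun i _ => (hq i.1.1).2))
      _ = ∏ i ∈ F, ENNReal.ofReal (1 - q i.1.1) :=
          ENNReal.ofReal_prod_of_nonneg (fun i _ => by linarith [(hq i.1.1).2])
      _ = ∏ i ∈ F, μ (O i.1.2 ⁻¹' ({some i.1.1}ᶜ : Set (Option Sig))) :=
          (Finset.prod_congr rfl hR).symm
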